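/- Let G be a graph with disjoint vertex sets A_1, ..., A_m (m ≥ 3) forming an induced cyclic sequence: each G[A_i] is connected, there is an edge between A_i and A_{i+1 mod m} for each i, and no edge between A_i and A_j when |i − j| is not congruent to 0 or 1 mod m. Then G contains an induced cycle with at least m vertices. -/

import Mathlib

open SimpleGraph

namespace Stmt9Aux

section ListHelpers

variable {α : Type*}

lemma head?_of_prefix {l₁ l₂ : List α} (h : l₁ <+: l₂) (hne : l₁ ≠ []) :
    l₂.head? = l₁.head? := by
  obtain ⟨t, rfl⟩ := h
  rw [List.head?_append, Option.or_of_isSome (List.isSome_head?.mpr hne)]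

lemma getLast?_of_suffix {l₁ l₂ : List α} (h : l₁ <:+ l₂) (hne : l₁ ≠ []) :
    l₂.getLast? = l₁.getLast? := by
  obtain ⟨t, rfl⟩ := h
  rw [List.getLast?_append, Option.or_of_isSome (List.getLast?_isSome.mpr hne)]

lemma getLast?_take_succ {l : List α} {k : ℕ} (h : k < l.length) :
    (l.take (k+1)).getLast? = some (l[k]) := by
  rw [List.take_succ, List.getElem?_eq_getElem h]
  exact List.getLast?_concat

lemma head?_drop' {l : List α} {k : ℕ} (h : k < l.length) :
    (l.drop k).head? = some (l[k]) := by
  rw [List.drop_eq_getElem_cons h]; rfl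

lemma take_drop_sublist (l : List α) {k j : ℕ} (h : k ≤ j) :
    List.Sublist (l.take k ++ l.drop j) l := by
  have h1 : l.take k = (l.take j).take k := by
    rw [List.take_take, Nat.min_eq_left h]
  have h2 : List.Sublist (l.take k ++ l.drop j) (l.take j ++ l.drop j) :=
    List.Sublist.append (by rw [h1]; exact List.take_sublist _ _) (List.Sublist.refl _)
  rwa [List.take_append_drop] at h2

lemma eq_take_pair_drop (l : List α) {k : ℕ} (h : k + 1 < l.length) :
    l = l.take k ++ [l[k], l[k+1]'h] ++ l.drop (k+2) := by
  conv_lhs => rw [← List.take_append_drop k l]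
  rw [List.drop_eq_getElem_cons (by omega), List.drop_eq_getElem_cons h]
  simp

lemma head?_flatten' {L : List (List α)} {l : List α}
    (hL : L.head? = some l) (hne : l ≠ []) : L.flatten.head? = l.head? := by
  cases L with
  | nil => simp at hL
  | cons a L =>
    obtain rfl : a = l := by simpa using hL
    rw [List.flatten_cons, List.head?_append,
      Option.or_of_isSome (List.isSome_head?.mpr hne)]

lemma getLast?_flatten' {L : List (List α)} {l : List α}
    (hL : L.getLast? = some l) (hne : l ≠ []) : L.flatten.getLast? = l.getLast? := by
  induction L with
  | nil => simp at hL
  | cons a L ih =>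
    cases L with
    | nil =>
      obtain rfl : a = l := by simpa using hL
      simp
    | cons b L' =>
      rw [List.getLast?_cons_cons] at hL
      rw [List.flatten_cons, List.getLast?_append, ih hL,
        Option.or_of_isSome (List.getLast?_isSome.mpr hne)]

end ListHelpers

section FinHelpers

lemma fin_succ_val {n : ℕ} [NeZero n] (i : Fin n) :
    ((i + 1 : Fin n)).val = (i.val + 1) % n := by
  conv_rhs => rw [Nat.add_mod, Nat.mod_eq_of_lt i.isLt]
  rw [Fin.add_def, Fin.val_one']

lemma fin_succ_val_cases {n : ℕ} [NeZero n] (i : Fin n) :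
    ((i + 1 : Fin n)).val = i.val + 1 ∧ i.val + 1 < n ∨
    ((i + 1 : Fin n)).val = 0 ∧ i.val + 1 = n := by
  rw [fin_succ_val]
  rcases Nat.lt_or_ge (i.val + 1) n with h | h
  · exact Or.inl ⟨Nat.mod_eq_of_lt h, h⟩
  · have he : i.val + 1 = n := by have := i.isLt; omega
    exact Or.inr ⟨by rw [he, Nat.mod_self], he⟩

lemma fin_succ_ne {n : ℕ} [NeZero n] (hn : 2 ≤ n) (i : Fin n) : i + 1 ≠ i := by
  intro h
  have := i.isLt
  rcases fin_succ_val_cases i with ⟨h1, h2⟩ | ⟨h1, h2⟩ <;> rw [h] at h1 <;> omega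

lemma fin_succ_succ_ne {n : ℕ} [NeZero n] (hn : 3 ≤ n) (i : Fin n) : i + 1 + 1 ≠ i := by
  intro h
  have hi := i.isLt
  rcases fin_succ_val_cases i with ⟨h1, h2⟩ | ⟨h1, h2⟩ <;>
    rcases fin_succ_val_cases (i + 1) with ⟨h3, h4⟩ | ⟨h3, h4⟩ <;>
      rw [h] at h3 <;> omega

end FinHelpers

lemma ofFn_getLast? {α : Type*} {n : ℕ} (f : Fin (n+1) → α) :
    (List.ofFn f).getLast? = some (f ⟨n, by omega⟩) := by
  rw [List.getLast?_eq_getElem?, List.length_ofFn, Nat.add_sub_cancel,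
    List.getElem?_eq_getElem (by simp), List.getElem_ofFn]

lemma ofFn_head? {α : Type*} {n : ℕ} (f : Fin (n+1) → α) :
    (List.ofFn f).head? = some (f 0) := by
  rw [List.ofFn_succ]
  rfl

section Embed

variable {V : Type*}

/-- `b` follows `a` on the cyclic order of `C`. -/
def NextIn (C : List V) (a b : V) : Prop :=
  [a, b] <:+: C ∨ (C.getLast? = some a ∧ C.head? = some b)

lemma sub_val_eq_one_iff {n : ℕ} [NeZero n] (hn : 3 ≤ n) (u v : Fin n) :
    (v - u).val = 1 ↔ v.val = (u.val + 1) % n := by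
  have hu := u.isLt; have hv := v.isLt
  rw [Fin.sub_def]
  simp only []
  rcases Nat.lt_or_ge (u.val + 1) n with h | h
  · rw [Nat.mod_eq_of_lt h]
    rcases Nat.lt_or_ge v.val u.val with h2 | h2
    · rw [Nat.mod_eq_of_lt (by omega)]
      omega
    · rw [show n - u.val + v.val = n + (v.val - u.val) by omega, Nat.add_mod_left,
        Nat.mod_eq_of_lt (by omega)]
      omega
  · rw [show n - u.val + v.val = v.val + 1 by omega,
      show (u.val + 1) % n = 0 by rw [show u.val + 1 = n by omega, Nat.mod_self]]
    rcases Nat.lt_or_ge (v.val + 1) n with h3 | h3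
    · rw [Nat.mod_eq_of_lt h3]; omega
    · rw [show v.val + 1 = n by omega, Nat.mod_self]; omega

lemma embed_of_fn (G : SimpleGraph V) {n : ℕ} (h3 : 3 ≤ n) (f : Fin n → V)
    (hinj : Function.Injective f)
    (hiff : ∀ u v, G.Adj (f u) (f v) ↔
      (v.val = (u.val + 1) % n ∨ u.val = (v.val + 1) % n)) :
    Nonempty (cycleGraph n ↪g G) := by
  haveI : NeZero n := ⟨by omega⟩
  refine ⟨⟨⟨f, hinj⟩, ?_⟩⟩
  intro u v
  rw [Function.Embedding.coeFn_mk, hiff, cycleGraph_adj',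
    sub_val_eq_one_iff h3, sub_val_eq_one_iff h3]
  exact or_comm

lemma embed_of_list (G : SimpleGraph V) (C : List V) (h3 : 3 ≤ C.length)
    (hnd : C.Nodup) (hch : C.Chain' G.Adj)
    (hwrap : ∃ a b, C.getLast? = some a ∧ C.head? = some b ∧ G.Adj a b)
    (hind : ∀ a b, G.Adj a b → a ∈ C → b ∈ C → NextIn C a b ∨ NextIn C b a) :
    Nonempty (cycleGraph C.length ↪g G) := by
  set n := C.length with hn
  haveI : NeZero n := ⟨by omega⟩
  let f : Fin n → V := fun u => C[u.val]
  have hinj : Function.Injective f := List.nodup_iff_injective_getElem.mp hnd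
  obtain ⟨a0, b0, hla, hhb, hab⟩ := hwrap
  have hlast : f ⟨n - 1, by omega⟩ = a0 := by
    have h' := List.getElem?_eq_getElem (l := C) (i := n - 1) (by omega)
    rw [List.getLast?_eq_getElem?] at hla
    rw [← hn] at hla
    rw [hla] at h'
    exact (Option.some.inj h').symm
  have hhead : f ⟨0, by omega⟩ = b0 := by
    have h' := List.getElem?_eq_getElem (l := C) (i := 0) (by omega)
    rw [List.head?_eq_getElem?] at hhb
    rw [hhb] at h'
    exact (Option.some.inj h').symm
  -- consecutive implies adjacent
  have step1 : ∀ u v : Fin n, v.val = (u.val + 1) % n → G.Adj (f u) (f v) := by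
    intro u v hv
    rcases Nat.lt_or_ge (u.val + 1) n with h | h
    · rw [Nat.mod_eq_of_lt h] at hv
      have hc := List.isChain_iff_getElem.mp hch u.val (by omega)
      have hv' : v = ⟨u.val + 1, by omega⟩ := by
        rw [Fin.ext_iff]; show v.val = u.val + 1; omega
      rw [hv']
      exact hc
    · have hun : u.val + 1 = n := by have := u.isLt; omega
      rw [show (u.val + 1) % n = 0 by rw [hun, Nat.mod_self]] at hv
      have hu' : u = ⟨n - 1, by omega⟩ := by
        rw [Fin.ext_iff]; show u.val = n - 1; omega
      have hv' : v = ⟨0, by omega⟩ := by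
        rw [Fin.ext_iff]; show v.val = 0; omega
      rw [hu', hv', hlast, hhead]
      exact hab
  -- NextIn implies index succ
  have step2 : ∀ u v : Fin n, NextIn C (f u) (f v) → v.val = (u.val + 1) % n := by
    intro u v hnext
    rcases hnext with ⟨s, t, hst⟩ | ⟨hla', hhb'⟩
    · have hlen : s.length + 2 + t.length = n := by
        have := congrArg List.length hst
        simp [List.length_append] at this
        omega
      have hu? : C[s.length]? = some (f u) := by
        rw [← hst, List.getElem?_append_left (by simp), List.getElem?_append_right (le_refl _)]
        simp
      have hv? : C[s.length + 1]? = some (f v) := by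
        rw [← hst, List.getElem?_append_left (by simp),
          List.getElem?_append_right (by omega)]
        simp [Nat.sub_self]
      have hu : f ⟨s.length, by omega⟩ = f u := by
        have h' := List.getElem?_eq_getElem (l := C) (i := s.length) (by omega)
        rw [hu?] at h'
        exact (Option.some.inj h').symm
      have hv : f ⟨s.length + 1, by omega⟩ = f v := by
        have h' := List.getElem?_eq_getElem (l := C) (i := s.length + 1) (by omega)
        rw [hv?] at h'
        exact (Option.some.inj h').symm
      have hu' : u = ⟨s.length, by omega⟩ := (hinj hu).symm
      have hv' : v = ⟨s.length + 1, by omega⟩ := (hinj hv).symm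
      rw [hu', hv']
      simp [Nat.mod_eq_of_lt (show s.length + 1 < n by omega)]
    · have hu : f ⟨n - 1, by omega⟩ = f u := by
        have h' := List.getElem?_eq_getElem (l := C) (i := n - 1) (by omega)
        rw [List.getLast?_eq_getElem?, ← hn] at hla'
        rw [hla'] at h'
        exact (Option.some.inj h').symm
      have hv : f ⟨0, by omega⟩ = f v := by
        have h' := List.getElem?_eq_getElem (l := C) (i := 0) (by omega)
        rw [List.head?_eq_getElem?] at hhb'
        rw [hhb'] at h'
        exact (Option.some.inj h').symm
      have hu' : u = ⟨n - 1, by omega⟩ := (hinj hu).symm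
      have hv' : v = ⟨0, by omega⟩ := (hinj hv).symm
      rw [hu', hv']
      simp [show n - 1 + 1 = n by omega, Nat.mod_self]
  refine embed_of_fn G h3 f hinj fun u v => ⟨fun h => ?_, fun h => ?_⟩
  · rcases hind _ _ h (List.getElem_mem _) (List.getElem_mem _) with h' | h'
    · exact Or.inl (step2 u v h')
    · exact Or.inr (step2 v u h')
  · rcases h with h | h
    · exact step1 u v h
    · exact (step1 v u h).symm

end Embed

section Sys

variable {V : Type*} {m : ℕ}

structure Sys (G : SimpleGraph V) (A : Fin (m+3) → Set V) where
  L : Fin (m+3) → List V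
  ne : ∀ i, L i ≠ []
  mem : ∀ i, ∀ v ∈ L i, v ∈ A i
  nodup : ∀ i, (L i).Nodup
  chain : ∀ i, (L i).Chain' G.Adj
  conn : ∀ i, ∃ a b, (L i).getLast? = some a ∧ (L (i + 1)).head? = some b ∧ G.Adj a b

variable {G : SimpleGraph V} {A : Fin (m+3) → Set V}

def Sys.size (S : Sys G A) : ℕ := ∑ i, (S.L i).length

lemma Sys.shrink_same (S : Sys G A) (i : Fin (m+3)) {k l : ℕ}
    (hl : l < (S.L i).length) (hkl : k + 1 < l)
    (hadj : G.Adj ((S.L i)[k]'(by omega)) ((S.L i)[l])) :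
    ∃ S' : Sys G A, S'.size < S.size := by
  classical
  set L0 := S.L i with hL0
  set Li : List V := L0.take (k+1) ++ L0.drop l with hLi
  have hk : k < L0.length := by omega
  have hsub : List.Sublist Li L0 := take_drop_sublist _ (by omega)
  have htne : L0.take (k+1) ≠ [] := by
    apply List.ne_nil_of_length_pos
    rw [List.length_take]; omega
  have hdne : L0.drop l ≠ [] := by
    apply List.ne_nil_of_length_pos
    rw [List.length_drop]; omega
  have hne : Li ≠ [] := by
    intro h
    rw [hLi, List.append_eq_nil_iff] at h
    exact htne h.1
  have hhead : Li.head? = L0.head? := by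
    rw [hLi, List.head?_append, Option.or_of_isSome (List.isSome_head?.mpr htne),
      head?_of_prefix (List.take_prefix _ _) htne]
  have hlast : Li.getLast? = L0.getLast? := by
    rw [hLi, List.getLast?_append, Option.or_of_isSome (List.getLast?_isSome.mpr hdne),
      getLast?_of_suffix (List.drop_suffix _ _) hdne]
  have hchain : Li.Chain' G.Adj := by
    rw [hLi]; show List.IsChain _ _; rw [List.isChain_append]
    refine ⟨(S.chain i).prefix (List.take_prefix _ _),
      (S.chain i).suffix (List.drop_suffix _ _), ?_⟩
    intro x hx y hy
    rw [getLast?_take_succ hk] at hx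
    rw [head?_drop' hl] at hy
    rw [Option.mem_some_iff] at hx hy
    rw [← hx, ← hy]
    exact hadj
  have hlen : Li.length < L0.length := by
    rw [hLi, List.length_append, List.length_take, List.length_drop]
    omega
  refine ⟨⟨fun j => if j = i then Li else S.L j, ?_, ?_, ?_, ?_, ?_⟩, ?_⟩
  · intro j; split
    · exact hne
    · exact S.ne j
  · intro j v hv; split at hv
    · next h => subst h; exact S.mem j v (hsub.subset hv)
    · exact S.mem j v hv
  · intro j; split
    · exact hsub.nodup (S.nodup i)
    · exact S.nodup j
  · intro j; split
    · exact hchain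
    · exact S.chain j
  · intro j
    obtain ⟨a, b, h1, h2, hab⟩ := S.conn j
    refine ⟨a, b, ?_, ?_, hab⟩
    · split
      · next h => subst h; rw [hlast]; exact h1
      · exact h1
    · split
      · next h =>
          rw [hhead]
          show (S.L i).head? = some b
          rw [← h]
          exact h2
      · exact h2
  · apply Finset.sum_lt_sum
    · intro j _
      dsimp only
      split
      · next h => subst h; exact hsub.length_le
      · exact le_refl _
    · exact ⟨i, Finset.mem_univ i, by dsimp only; rw [if_pos rfl]; exact hlen⟩

lemma Sys.shrink_cross (S : Sys G A) (i : Fin (m+3)) {k l : ℕ}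
    (hk : k < (S.L i).length) (hl : l < (S.L (i+1)).length)
    (hadj : G.Adj ((S.L i)[k]) ((S.L (i+1))[l]))
    (hne2 : ¬(k = (S.L i).length - 1 ∧ l = 0)) :
    ∃ S' : Sys G A, S'.size < S.size := by
  classical
  have hm3 : (3:ℕ) ≤ m + 3 := by omega
  have hii : i + 1 ≠ i := fin_succ_ne (by omega) i
  have hii2 : i + 1 + 1 ≠ i := fin_succ_succ_ne (by omega) i
  have hii2' : i + 1 + 1 ≠ i + 1 := fin_succ_ne (by omega) (i + 1)
  set Li : List V := (S.L i).take (k+1) with hLi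
  set Lj : List V := (S.L (i+1)).drop l with hLj
  have hLine : Li ≠ [] := by
    apply List.ne_nil_of_length_pos; rw [hLi, List.length_take]; omega
  have hLjne : Lj ≠ [] := by
    apply List.ne_nil_of_length_pos; rw [hLj, List.length_drop]; omega
  have hheadi : Li.head? = (S.L i).head? :=
    (head?_of_prefix (List.take_prefix _ _) hLine).symm
  have hlastj : Lj.getLast? = (S.L (i+1)).getLast? :=
    (getLast?_of_suffix (List.drop_suffix _ _) hLjne).symm
  have hlasti : Li.getLast? = some ((S.L i)[k]) := getLast?_take_succ hk
  have hheadj : Lj.head? = some ((S.L (i+1))[l]) := head?_drop' hl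
  refine ⟨⟨fun j => if j = i then Li else if j = i + 1 then Lj else S.L j,
    ?_, ?_, ?_, ?_, ?_⟩, ?_⟩
  · intro j; split
    · exact hLine
    · split
      · exact hLjne
      · exact S.ne j
  · intro j v hv
    split at hv
    · next h => subst h; exact S.mem j v ((List.take_sublist _ _).subset hv)
    · split at hv
      · next h => subst h; exact S.mem _ v ((List.drop_sublist _ _).subset hv)
      · exact S.mem j v hv
  · intro j; split
    · exact (List.take_sublist _ _).nodup (S.nodup i)
    · split
      · exact (List.drop_sublist _ _).nodup (S.nodup _)
      · exact S.nodup j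
  · intro j; split
    · exact (S.chain i).prefix (List.take_prefix _ _)
    · split
      · exact (S.chain _).suffix (List.drop_suffix _ _)
      · exact S.chain j
  · intro j
    by_cases hji : j = i
    · subst hji
      refine ⟨(S.L j)[k], (S.L (j+1))[l], ?_, ?_, hadj⟩
      · rw [if_pos rfl]; exact hlasti
      · rw [if_neg hii, if_pos rfl]; exact hheadj
    · by_cases hji1 : j = i + 1
      · subst hji1
        obtain ⟨a, b, h1, h2, hab⟩ := S.conn (i+1)
        refine ⟨a, b, ?_, ?_, hab⟩
        · rw [if_neg hii, if_pos rfl, hlastj]; exact h1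
        · rw [if_neg hii2, if_neg hii2']; exact h2
      · obtain ⟨a, b, h1, h2, hab⟩ := S.conn j
        refine ⟨a, b, ?_, ?_, hab⟩
        · rw [if_neg hji, if_neg hji1]; exact h1
        · by_cases hj1 : j + 1 = i
          · rw [if_pos hj1, hheadi, ← hj1]
            exact h2
          · have hj2 : j + 1 ≠ i + 1 := fun h => hji (add_right_cancel h)
            rw [if_neg hj1, if_neg hj2]; exact h2
  · apply Finset.sum_lt_sum
    · intro j _
      dsimp only
      split
      · next h => subst h; rw [hLi, List.length_take]; omega
      · split
        · next h h' => subst h'; rw [hLj, List.length_drop]; omega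
        · exact le_refl _
    · have hstrict : k + 1 < (S.L i).length ∨ 0 < l := by omega
      rcases hstrict with h | h
      · exact ⟨i, Finset.mem_univ i, by
          dsimp only; rw [if_pos rfl, hLi, List.length_take]; omega⟩
      · exact ⟨i + 1, Finset.mem_univ _, by
          dsimp only; rw [if_neg hii, if_pos rfl, hLj, List.length_drop]; omega⟩

lemma sys_nonempty
    (hconn : ∀ i, (G.induce (A i)).Connected)
    (hedge : ∀ i, ∃ x ∈ A i, ∃ y ∈ A (i+1), G.Adj x y) :
    Nonempty (Sys G A) := by
  classical
  choose x hx y hy hxy using hedge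
  have path : ∀ (i : Fin (m+3)) (a b : V), a ∈ A i → b ∈ A i →
      ∃ p : List V, p ≠ [] ∧ p.Nodup ∧ p.Chain' G.Adj ∧ (∀ v ∈ p, v ∈ A i) ∧
        p.head? = some a ∧ p.getLast? = some b := by
    intro i a b ha hb
    obtain ⟨w⟩ := (hconn i).preconnected ⟨a, ha⟩ ⟨b, hb⟩
    let p := w.toPath
    refine ⟨p.1.support.map Subtype.val, ?_, ?_, ?_, ?_, ?_, ?_⟩
    · rw [ne_eq, List.map_eq_nil_iff]
      exact p.1.support_ne_nil
    · exact (p.2.support_nodup).map Subtype.val_injective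
    · show List.IsChain _ _; rw [List.isChain_map]
      exact (p.1.isChain_adj_support).imp fun a b h => by
        simpa using h
    · intro v hv
      obtain ⟨u, hu, rfl⟩ := List.mem_map.mp hv
      exact u.2
    · rw [List.head?_map, List.head?_eq_head (p.1.support_ne_nil),
        Walk.head_support]
      rfl
    · rw [List.getLast?_map, List.getLast?_eq_getLast (p.1.support_ne_nil),
        Walk.getLast_support]
      rfl
  have hymem : ∀ i : Fin (m+3), y (i - 1) ∈ A i := by
    intro i
    have := hy (i - 1)
    rwa [sub_add_cancel] at this
  choose P hP1 hP2 hP3 hP4 hP5 hP6 using fun i => path i (y (i-1)) (x i) (hymem i) (hx i)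
  refine ⟨⟨P, hP1, hP4, hP2, hP3, ?_⟩⟩
  intro i
  refine ⟨x i, y i, hP6 i, ?_, hxy i⟩
  have := hP5 (i + 1)
  rwa [add_sub_cancel_right] at this

end Sys

theorem aux_main {V : Type*} (G : SimpleGraph V) (m : ℕ)
    (A : Fin (m+3) → Set V)
    (hdisj : ∀ i j, i ≠ j → Disjoint (A i) (A j))
    (hconn : ∀ i, (G.induce (A i)).Connected)
    (hedge : ∀ i, ∃ x ∈ A i, ∃ y ∈ A (i + 1), G.Adj x y)
    (hnon : ∀ i j, j ≠ i → j ≠ i + 1 → i ≠ j + 1 →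
      ∀ x ∈ A i, ∀ y ∈ A j, ¬ G.Adj x y) :
    ∃ n : ℕ, m + 3 ≤ n ∧ Nonempty (cycleGraph n ↪g G) := by
  classical
  obtain ⟨S0⟩ := sys_nonempty hconn hedge
  have hex : ∃ k, ∃ S : Sys G A, S.size = k := ⟨S0.size, S0, rfl⟩
  obtain ⟨S, hSmin⟩ : ∃ S : Sys G A, ∀ S' : Sys G A, S.size ≤ S'.size := by
    obtain ⟨S, hS⟩ := Nat.find_spec hex
    exact ⟨S, fun S' => hS ▸ Nat.find_min' hex ⟨S', rfl⟩⟩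
  set C := (List.ofFn S.L).flatten with hC
  have hnonil : [] ∉ List.ofFn S.L := by
    intro h
    rw [List.mem_ofFn] at h
    obtain ⟨i, hi⟩ := h
    exact S.ne i hi
  have hlenC : C.length = ∑ i, (S.L i).length := by
    rw [hC, List.length_flatten, List.map_ofFn, List.sum_ofFn]
    rfl
  have hmlen : m + 3 ≤ C.length := by
    rw [hlenC]
    calc m + 3 = ∑ _i : Fin (m+3), 1 := by simp
    _ ≤ _ := Finset.sum_le_sum fun i _ => List.length_pos_iff.mpr (S.ne i)
  have hmem : ∀ a ∈ C, ∃ i, a ∈ S.L i := by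
    intro a ha
    rw [hC, List.mem_flatten] at ha
    obtain ⟨l, hl, hal⟩ := ha
    rw [List.mem_ofFn] at hl
    obtain ⟨i, rfl⟩ := hl
    exact ⟨i, hal⟩
  have hnodup : C.Nodup := by
    rw [hC, List.nodup_flatten]
    constructor
    · intro l hl
      rw [List.mem_ofFn] at hl
      obtain ⟨i, rfl⟩ := hl
      exact S.nodup i
    · rw [List.pairwise_ofFn]
      intro i j hij a hai haj
      exact Set.disjoint_left.mp (hdisj i j (ne_of_lt hij)) (S.mem i a hai) (S.mem j a haj)
  have hchain : C.Chain' G.Adj := by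
    rw [hC]; show List.IsChain _ _; rw [List.isChain_flatten hnonil]
    constructor
    · intro l hl
      rw [List.mem_ofFn] at hl
      obtain ⟨i, rfl⟩ := hl
      exact S.chain i
    · rw [List.isChain_iff_getElem]
      intro kk hkk
      simp only [List.length_ofFn] at hkk
      simp only [List.get_eq_getElem, List.getElem_ofFn]
      have hsucc : (⟨kk, by omega⟩ : Fin (m+3)) + 1 = ⟨kk+1, by omega⟩ := by
        rw [Fin.ext_iff, fin_succ_val]
        show (kk + 1) % (m + 3) = kk + 1
        exact Nat.mod_eq_of_lt (by omega)
      obtain ⟨a, b, h1, h2, hab⟩ := S.conn ⟨kk, by omega⟩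
      rw [hsucc] at h2
      intro p hp q hq
      rw [Option.mem_def] at hp hq
      rw [h1] at hp; rw [h2] at hq
      obtain rfl := Option.some.inj hp
      obtain rfl := Option.some.inj hq
      exact hab
  -- last and head of C
  have hClast : C.getLast? = (S.L ⟨m+2, by omega⟩).getLast? := by
    rw [hC]
    exact getLast?_flatten' (ofFn_getLast? S.L) (S.ne _)
  have hChead : C.head? = (S.L 0).head? := by
    rw [hC]
    exact head?_flatten' (ofFn_head? S.L) (S.ne _)
  have hwrapidx : (⟨m+2, by omega⟩ : Fin (m+3)) + 1 = 0 := by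
    rw [Fin.ext_iff, fin_succ_val]
    show (m + 2 + 1) % (m + 3) = (0 : Fin (m+3)).val
    rw [Nat.mod_self]
    rfl
  have hwrap : ∃ a b, C.getLast? = some a ∧ C.head? = some b ∧ G.Adj a b := by
    obtain ⟨a, b, h1, h2, hab⟩ := S.conn ⟨m+2, by omega⟩
    rw [hwrapidx] at h2
    exact ⟨a, b, by rw [hClast]; exact h1, by rw [hChead]; exact h2, hab⟩
  -- induced property
  have same : ∀ (i : Fin (m+3)) (kk ll : ℕ) (hk : kk < (S.L i).length)
      (hl : ll < (S.L i).length), kk < ll →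
      G.Adj ((S.L i)[kk]) ((S.L i)[ll]) → [(S.L i)[kk], (S.L i)[ll]] <:+: C := by
    intro i kk ll hk hl hlt hadj
    by_cases hcons : ll = kk + 1
    · subst hcons
      have hdec := eq_take_pair_drop (S.L i) hl
      have hinf : [(S.L i)[kk], (S.L i)[kk+1]'hl] <:+: S.L i :=
        ⟨(S.L i).take kk, (S.L i).drop (kk+2), hdec.symm⟩
      exact hinf.trans (List.infix_of_mem_flatten (List.mem_ofFn.mpr ⟨i, rfl⟩))
    · exfalso
      obtain ⟨S', hS'⟩ := S.shrink_same i hl (by omega) hadj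
      exact absurd (hSmin S') (by omega)
  have cross : ∀ (i : Fin (m+3)) (kk ll : ℕ) (hk : kk < (S.L i).length)
      (hl : ll < (S.L (i+1)).length),
      G.Adj ((S.L i)[kk]) ((S.L (i+1))[ll]) →
      NextIn C ((S.L i)[kk]) ((S.L (i+1))[ll]) := by
    intro i kk ll hk hl hadj
    by_cases hend : kk = (S.L i).length - 1 ∧ ll = 0
    · obtain ⟨hkk, hll⟩ := hend
      subst hkk
      subst hll
      have hlasti : (S.L i).getLast? = some ((S.L i)[(S.L i).length - 1]'hk) := by
        rw [List.getLast?_eq_getElem?, List.getElem?_eq_getElem hk]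
      have hheadj : (S.L (i+1)).head? = some ((S.L (i+1))[0]'hl) := by
        rw [List.head?_eq_getElem?, List.getElem?_eq_getElem hl]
      rcases fin_succ_val_cases i with ⟨h1, h2⟩ | ⟨h1, h2⟩
      · -- non-wrapping: consecutive segments
        left
        obtain ⟨s, hs⟩ := List.getLast?_eq_some_iff.mp hlasti
        obtain ⟨t, ht⟩ := List.head?_eq_some_iff.mp hheadj
        have hdec := eq_take_pair_drop (List.ofFn S.L) (k := i.val)
          (by rw [List.length_ofFn]; omega)
        have hget1 : (List.ofFn S.L)[i.val]'(by rw [List.length_ofFn]; omega) = S.L i := by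
          rw [List.getElem_ofFn]
        have hget2 : (List.ofFn S.L)[i.val+1]'(by rw [List.length_ofFn]; omega) = S.L (i+1) := by
          rw [List.getElem_ofFn]
          congr 1
          rw [Fin.ext_iff, h1]
        rw [hget1, hget2] at hdec
        have hseg : S.L i ++ S.L (i+1) <:+: C := by
          refine ⟨((List.ofFn S.L).take i.val).flatten,
            ((List.ofFn S.L).drop (i.val+2)).flatten, ?_⟩
          rw [hC]
          conv_rhs => rw [hdec]
          simp [List.flatten_append]
        refine List.IsInfix.trans ?_ hseg
        refine ⟨s, t, ?_⟩
        conv_rhs => rw [hs, ht]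
        simp
      · -- wrapping: i is the last index
        right
        have hi : i = ⟨m+2, by omega⟩ := by
          rw [Fin.ext_iff]; simpa using (by omega : i.val = m + 2)
        constructor
        · rw [hClast, ← hi]; exact hlasti
        · have h0 : i + 1 = 0 := by rw [hi]; exact hwrapidx
          rw [hChead, ← h0]; exact hheadj
    · exfalso
      obtain ⟨S', hS'⟩ := S.shrink_cross i hk hl hadj hend
      exact absurd (hSmin S') (by omega)
  have hPhi : ∀ a b, G.Adj a b → a ∈ C → b ∈ C → NextIn C a b ∨ NextIn C b a := by
    intro a b hadj ha hb
    obtain ⟨i, hai⟩ := hmem a ha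
    obtain ⟨j, hbj⟩ := hmem b hb
    obtain ⟨kk, hk, rfl⟩ := List.getElem_of_mem hai
    obtain ⟨ll, hl, rfl⟩ := List.getElem_of_mem hbj
    have hcase : j = i ∨ j = i + 1 ∨ i = j + 1 := by
      by_contra hcon
      push_neg at hcon
      exact hnon i j hcon.1 hcon.2.1 hcon.2.2 _ (S.mem i _ (List.getElem_mem _))
        _ (S.mem j _ (List.getElem_mem _)) hadj
    rcases hcase with rfl | rfl | hij
    · have hkl : kk ≠ ll := fun h => by
        subst h
        exact hadj.ne rfl
      rcases Nat.lt_or_ge kk ll with h | h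
      · exact Or.inl (Or.inl (same j kk ll hk hl h hadj))
      · exact Or.inr (Or.inl (same j ll kk hl hk (by omega) hadj.symm))
    · exact Or.inl (cross i kk ll hk hl hadj)
    · subst hij
      exact Or.inr (cross j ll kk hl hk hadj.symm)
  exact ⟨C.length, hmlen, embed_of_list G C (by omega) hnodup hchain hwrap hPhi⟩

end Stmt9Aux

open Stmt9Aux in
theorem stmt_9 {V : Type*} [Fintype V] (G : SimpleGraph V) (m : ℕ) (hm : 3 ≤ m)
    (A : Fin m → Set V)
    (hdisj : ∀ i j : Fin m, i ≠ j → Disjoint (A i) (A j))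
    (hconn : ∀ i : Fin m, (G.induce (A i)).Connected)
    (hedge : ∀ i : Fin m, ∃ x ∈ A i, ∃ y ∈ A (i + ⟨1, by omega⟩), G.Adj x y)
    (hnon : ∀ i j : Fin m, j ≠ i → j ≠ i + ⟨1, by omega⟩ → i ≠ j + ⟨1, by omega⟩ →
      ∀ x ∈ A i, ∀ y ∈ A j, ¬ G.Adj x y) :
    ∃ n : ℕ, m ≤ n ∧ Nonempty (cycleGraph n ↪g G) := by
  obtain ⟨m', rfl⟩ : ∃ k, m = k + 3 := ⟨m - 3, by omega⟩
  have h1 : (⟨1, by omega⟩ : Fin (m' + 3)) = 1 := by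
    rw [Fin.ext_iff, Fin.val_one']
    simp [Nat.mod_eq_of_lt (show 1 < m' + 3 by omega)]
  rw [h1] at hedge hnon
  obtain ⟨n, hn, hne⟩ := aux_main G m' A hdisj hconn hedge hnon
  exact ⟨n, hn, hne⟩
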